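/- Let d ≥ 1 and let v : (Fin n → ℝ) → ℝ be d-SOS. Let A ⊆ Fin n and B = Aᶜ. Then for all vectors s, y : Fin n → ℝ with s ≥ 0 and y ≥ 0, and all vectors s' : Fin n → ℝ with s'(j) ≥ s(j) ≥ 0 for every j ∈ B, one has d·( v(t₁) − v(t₀) ) ≥ v(t₁') − v(t₀'), where t₀ agrees with s everywhere, t₁ agrees with s+y on A and with s on B, t₀' agrees with s on A and with s' on B, and t₁' agrees with s+y on A and with s' on B. -/
import Mathlib


/-- `v` is a `d`-approximate submodular-over-signals (`d`-SOS) valuation: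
for every coordinate `j`, every `x ≥ 0` and `δ ≥ 0`, and all vectors
`0 ≤ t' ≤ t` coordinatewise, the marginal increase of `v` in coordinate `j`
from `x` to `x + δ` at the lower profile `t'`, multiplied by `d`, dominates
the corresponding marginal increase at the higher profile `t`. -/
def dSOS {n : ℕ} (d : ℝ) (v : (Fin n → ℝ) → ℝ) : Prop :=
  ∀ (j : Fin n) (x δ : ℝ), 0 ≤ x → 0 ≤ δ →
    ∀ t t' : Fin n → ℝ, (∀ l, 0 ≤ t' l) → (∀ l, t' l ≤ t l) →
      d * (v (Function.update t' j (x + δ)) - v (Function.update t' j x)) ≥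
        v (Function.update t j (x + δ)) - v (Function.update t j x)

/-- Lemma 2.8 (sm-sets): for a `d`-SOS valuation `v`, an arbitrary set `A` of
coordinates (with complement `B`), nonnegative vectors `s, y`, and a vector `s'`
dominating `s` on `B`, we have
`d·(v(s_A + y_A, s_B) − v(s_A, s_B)) ≥ v(s_A + y_A, s'_B) − v(s_A, s'_B)`. -/
theorem sm_sets {n : ℕ} (d : ℝ) (hd : 1 ≤ d) (v : (Fin n → ℝ) → ℝ)
    (hv : dSOS d v) (A : Finset (Fin n)) (s y s' : Fin n → ℝ)
    (hs : ∀ j, 0 ≤ s j) (hy : ∀ j, 0 ≤ y j)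
    (hs' : ∀ j ∉ A, s j ≤ s' j) :
    d * (v (fun j => if j ∈ A then s j + y j else s j) - v s) ≥
      v (fun j => if j ∈ A then s j + y j else s' j)
        - v (fun j => if j ∈ A then s j else s' j) := by
  classical
  set b : Fin n → ℝ := fun j => if j ∈ A then s j else s' j with hb
  have hsb : ∀ j, s j ≤ b j := by
    intro j
    by_cases hj : j ∈ A <;> simp [hb, hj, hs' j]
  have aux : ∀ T : Finset (Fin n), T ⊆ A →
      d * (v (fun j => if j ∈ T then s j + y j else s j) - v s) ≥
        v (fun j => if j ∈ T then s j + y j else b j) - v b := by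
    intro T
    induction T using Finset.induction_on with
    | empty =>
        intro _
        simp
    | @insert a T ha ih =>
        intro hsub
        have haA : a ∈ A := hsub (Finset.mem_insert_self a T)
        have hTA : T ⊆ A := fun x hx => hsub (Finset.mem_insert_of_mem hx)
        set L : Fin n → ℝ := fun j => if j ∈ T then s j + y j else s j with hL
        set U : Fin n → ℝ := fun j => if j ∈ T then s j + y j else b j with hU
        have hL0 : ∀ l, 0 ≤ L l := by
          intro l
          by_cases hl : l ∈ T <;>
            simp [hL, hl, hs l, add_nonneg (hs l) (hy l)]
        have hLU : ∀ l, L l ≤ U l := by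
          intro l
          by_cases hl : l ∈ T <;> simp [hL, hU, hl, hsb l]
        have hstep := hv a (s a) (y a) (hs a) (hy a) U L hL0 hLU
        have hLa : L a = s a := by simp [hL, ha]
        have hUa : U a = b a := by simp [hU, ha]
        have hbaeq : b a = s a := by simp [hb, haA]
        have e1 : Function.update L a (s a + y a) =
            fun j => if j ∈ insert a T then s j + y j else s j := by
          funext j
          by_cases hj : j = a
          · subst hj; simp [Function.update_self]
          · simp [Function.update_of_ne hj, hL, Finset.mem_insert, hj]
        have e2 : Function.update L a (s a) = L := by
          rw [← hLa]; exact Function.update_eq_self a L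
        have e3 : Function.update U a (s a + y a) =
            fun j => if j ∈ insert a T then s j + y j else b j := by
          funext j
          by_cases hj : j = a
          · subst hj; simp [Function.update_self]
          · simp [Function.update_of_ne hj, hU, Finset.mem_insert, hj]
        have e4 : Function.update U a (s a) = U := by
          rw [← hbaeq, ← hUa]; exact Function.update_eq_self a U
        rw [e1, e2, e3, e4] at hstep
        have ihT := ih hTA
        have := add_le_add hstep.le ihT.le
        calc v (fun j => if j ∈ insert a T then s j + y j else b j) - v b
            = (v (fun j => if j ∈ insert a T then s j + y j else b j) - v U)
              + (v U - v b) := by ring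
          _ ≤ d * (v (fun j => if j ∈ insert a T then s j + y j else s j) - v L)
              + d * (v L - v s) := this
          _ = d * (v (fun j => if j ∈ insert a T then s j + y j else s j) - v s) := by
              ring
  have := aux A le_rfl
  have heq : (fun j => if j ∈ A then s j + y j else b j)
      = fun j => if j ∈ A then s j + y j else s' j := by
    funext j
    by_cases hj : j ∈ A <;> simp [hb, hj]
  rwa [heq] at this
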